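/- arXiv:2012.11706 — 4 statements merged into one kernel-verified Lean document; each statement's English description precedes it below -/
import Mathlib

section
/- Let d, N ≥ 1 and for each j ∈ {1,…,N} let γ_j : [0,1] → ℝ^d be AC² with derivative g_j. Then there exists a Borel measurable map v : ℝ × ℝ^d → ℝ^d such that for every j ∈ {1,…,N}, v(t, γ_j(t)) = g_j(t) for Lebesgue-a.e. t ∈ (0,1); i.e., finitely many AC² curves admit a common velocity field, well defined even where the curves intersect. (Key step in the proof of Lemma 2.2.) -/
open MeasureTheory Set Filter Metric
open scoped Topology Interval

/-- Almost every point of a set `S ⊆ ℝ` is an accumulation point of `S`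
(the isolated points of `S` form a countable set). -/
lemma ae_accPt_of_mem (S : Set ℝ) :
    ∀ᵐ x ∂(volume : Measure ℝ), x ∈ S → AccPt x (𝓟 S) := by
  have hI : {x : ℝ | x ∈ S ∧ ¬ AccPt x (𝓟 S)}.Countable := by
    have hsub : {x : ℝ | x ∈ S ∧ ¬ AccPt x (𝓟 S)} ⊆
        ⋃ (p : ℚ) (q : ℚ), {x : ℝ | S ∩ Ioo (p : ℝ) (q : ℝ) = {x}} := by
      rintro x ⟨hxS, hx⟩
      rw [accPt_iff_nhds] at hx
      push_neg at hx
      obtain ⟨U, hU, hUx⟩ := hx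
      obtain ⟨a, b, hab, habU⟩ := mem_nhds_iff_exists_Ioo_subset.1 hU
      obtain ⟨p, hp1, hp2⟩ := exists_rat_btwn hab.1
      obtain ⟨q, hq1, hq2⟩ := exists_rat_btwn hab.2
      refine mem_iUnion.2 ⟨p, mem_iUnion.2 ⟨q, ?_⟩⟩
      have hIooU : Ioo (p : ℝ) (q : ℝ) ⊆ U := fun y hy =>
        habU ⟨hp1.trans hy.1, hy.2.trans hq2⟩
      apply Set.eq_singleton_iff_unique_mem.2
      constructor
      · exact ⟨hxS, hp2, hq1⟩
      · rintro y ⟨hyS, hy⟩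
        exact hUx y ⟨hIooU hy, hyS⟩
    exact Set.Countable.mono hsub
      (Set.countable_iUnion fun p => Set.countable_iUnion fun q =>
        Set.Subsingleton.countable (fun x hx y hy => by
          have := hx.symm.trans hy
          exact Set.singleton_eq_singleton_iff.1 this))
  have h0 : (volume : Measure ℝ) {x : ℝ | x ∈ S ∧ ¬ AccPt x (𝓟 S)} = 0 :=
    hI.measure_zero _
  rw [ae_iff]
  convert h0 using 2
  ext x
  simp only [mem_setOf_eq, Classical.not_imp]


/-- If a function has derivative `c` at a point `x` which is an accumulation point of a set `S`
on which the function is constant (with value `φ x`), then `c = 0`. -/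
lemma deriv_eq_zero_of_constant_on {E : Type*} [NormedAddCommGroup E] [NormedSpace ℝ E]
    {φ : ℝ → E} {c : E} {x : ℝ} {S : Set ℝ}
    (hφ : HasDerivAt φ c x) (hS : ∀ s ∈ S, φ s = φ x) (hacc : AccPt x (𝓟 S)) : c = 0 := by
  set l : Filter ℝ := 𝓝[≠] x ⊓ 𝓟 S with hl
  haveI : l.NeBot := hacc
  have h1 : Tendsto (fun y => ‖y - x‖⁻¹ * ‖φ y - φ x - (y - x) • c‖) l (𝓝 0) :=
    (hasDerivAt_iff_tendsto.1 hφ).mono_left (inf_le_left.trans nhdsWithin_le_nhds)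
  have h2 : (fun _ : ℝ => ‖c‖) =ᶠ[l] fun y => ‖y - x‖⁻¹ * ‖φ y - φ x - (y - x) • c‖ := by
    have hyS : ∀ᶠ y in l, y ∈ S := mem_inf_of_right (mem_principal_self S)
    have hyx : ∀ᶠ y in l, y ≠ x := mem_inf_of_left self_mem_nhdsWithin
    filter_upwards [hyS, hyx] with y hyS hyx
    rw [hS y hyS, sub_self, zero_sub, norm_neg, norm_smul]
    rw [inv_mul_cancel_left₀ (by simp [sub_eq_zero, hyx] : ‖y - x‖ ≠ 0)]
  have := tendsto_nhds_unique (h1.congr' h2.symm) tendsto_const_nhds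
  simpa using this.symm

/-- Lebesgue differentiation / FTC: the primitive of an integrable function is a.e.
differentiable with derivative the function itself. -/
lemma ae_hasDerivAt_primitive {E : Type*} [NormedAddCommGroup E] [NormedSpace ℝ E]
    [CompleteSpace E] {f : ℝ → E} (hf : Integrable f (volume : Measure ℝ)) :
    ∀ᵐ x ∂(volume : Measure ℝ), HasDerivAt (fun t => ∫ s in (0:ℝ)..t, f s) (f x) x := by
  have hloc : LocallyIntegrable f volume := hf.locallyIntegrable
  filter_upwards [(Besicovitch.vitaliFamily (volume : Measure ℝ)).ae_tendsto_average_norm_sub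
    hloc] with x hx
  have hball : Tendsto (fun r : ℝ => ⨍ z in closedBall x r, ‖f z - f x‖) (𝓝[>] 0) (𝓝 0) :=
    hx.comp (Besicovitch.tendsto_filterAt volume x)
  rw [hasDerivAt_iff_tendsto]
  set G : ℝ → ℝ := fun y => 2 * ⨍ z in closedBall x (dist y x), ‖f z - f x‖ with hG
  have havg_nonneg : ∀ r : ℝ, 0 ≤ ⨍ z in closedBall x r, ‖f z - f x‖ := by
    intro r
    rw [setAverage_eq]
    simp only [smul_eq_mul]
    positivity
  have hbound : ∀ y : ℝ,
      ‖y - x‖⁻¹ * ‖(∫ s in (0:ℝ)..y, f s) - (∫ s in (0:ℝ)..x, f s) - (y - x) • f x‖ ≤ G y := by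
    intro y
    rcases eq_or_ne y x with rfl | hyx
    · simp only [sub_self, norm_zero, zero_smul, sub_zero, inv_zero, zero_mul, hG]
      exact mul_nonneg (by norm_num) (havg_nonneg _)
    · set r : ℝ := dist y x with hr
      have hr0 : 0 < r := dist_pos.2 hyx
      have hint : ∀ a b : ℝ, IntervalIntegrable f volume a b := fun a b =>
        hf.intervalIntegrable
      have e1 : (∫ s in (0:ℝ)..y, f s) - (∫ s in (0:ℝ)..x, f s) = ∫ s in x..y, f s :=
        intervalIntegral.integral_interval_sub_left (hint 0 y) (hint 0 x)
      have e2 : (y - x) • f x = ∫ _ in x..y, f x := (intervalIntegral.integral_const (f x)).symm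
      rw [e1, e2, ← intervalIntegral.integral_sub (hint x y) intervalIntegrable_const]
      have hsub : Ι x y ⊆ closedBall x r := by
        intro z hz
        rw [Real.closedBall_eq_Icc]
        rcases le_total x y with hxy | hxy
        · rw [uIoc_of_le hxy] at hz
          have : r = y - x := by
            rw [hr, Real.dist_eq, abs_of_nonneg (by linarith : (0:ℝ) ≤ y - x)]
          constructor <;> [linarith [hz.1, hz.2]; linarith [hz.1, hz.2] ]
        · rw [uIoc_of_ge hxy] at hz
          have : r = x - y := by
            rw [hr, Real.dist_eq, abs_of_nonpos (by linarith : y - x ≤ 0)]; ring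
          constructor <;> [linarith [hz.1, hz.2]; linarith [hz.1, hz.2] ]
      have hintOn : IntegrableOn (fun z => ‖f z - f x‖) (closedBall x r) volume :=
        (hf.integrableOn.sub (integrableOn_const (by
          rw [Real.volume_closedBall]; exact ENNReal.ofReal_ne_top))).norm
      have step1 : ‖∫ s in x..y, (f s - f x)‖ ≤ ∫ z in closedBall x r, ‖f z - f x‖ :=
        le_trans intervalIntegral.norm_integral_le_integral_norm_uIoc
          (setIntegral_mono_set hintOn
            (Eventually.of_forall fun z => norm_nonneg _) (HasSubset.Subset.eventuallyLE hsub))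
      have hvol : (volume (closedBall x r)).toReal = 2 * r := by
        rw [Real.volume_closedBall, ENNReal.toReal_ofReal (by positivity)]
      have e3 : (∫ z in closedBall x r, ‖f z - f x‖)
          = (2 * r) * ⨍ z in closedBall x r, ‖f z - f x‖ := by
        rw [setAverage_eq, smul_eq_mul, measureReal_def, hvol, ← mul_assoc,
          mul_inv_cancel₀ (by positivity), one_mul]
      have hnorm : ‖y - x‖ = r := by rw [hr, Real.dist_eq, Real.norm_eq_abs]
      calc ‖y - x‖⁻¹ * ‖∫ s in x..y, (f s - f x)‖
          ≤ r⁻¹ * ((2 * r) * ⨍ z in closedBall x r, ‖f z - f x‖) := by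
            rw [hnorm, ← e3]
            exact mul_le_mul_of_nonneg_left step1 (by positivity)
        _ = G y := by
            rw [hG]
            field_simp
            ring
  refine squeeze_zero (fun y => by positivity) hbound ?_
  have h1 : Tendsto G (𝓝[≠] x) (𝓝 0) := by
    have hdist : Tendsto (fun y : ℝ => dist y x) (𝓝[≠] x) (𝓝[>] 0) := by
      rw [tendsto_nhdsWithin_iff]
      constructor
      · exact tendsto_nhdsWithin_of_tendsto_nhds
            (by simpa using ((continuous_id.dist (continuous_const :
            Continuous fun _ : ℝ => x))).tendsto x)
      · exact eventually_mem_nhdsWithin.mono fun y hy => dist_pos.2 hy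
    simpa using (hball.comp hdist).const_mul (2 : ℝ)
  have h2 : Tendsto G (pure x) (𝓝 0) := by
    have : G x = 0 := by
      simp only [hG, dist_self, closedBall_zero, setAverage_eq]
      simp [Real.volume_singleton]
    rw [tendsto_pure_left]
    intro s hs
    rw [this]
    exact mem_of_mem_nhds hs
  rw [← nhdsNE_sup_pure x]
  exact Tendsto.sup h1 h2

/-- A curve `γ : [0,1] → ℝ^d` is AC² with derivative `g` if `g ∈ L²((0,1); ℝ^d)` and
`γ(t) = γ(0) + ∫₀ᵗ g(s) ds` for all `t ∈ [0,1]`. -/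
def IsAC2 {d : ℕ} (γ g : ℝ → EuclideanSpace ℝ (Fin d)) : Prop :=
  MemLp g 2 (volume.restrict (Ioc (0:ℝ) 1)) ∧
  ∀ t ∈ Icc (0:ℝ) 1, γ t = γ 0 + ∫ s in (0:ℝ)..t, g s

/-- Finitely many AC² curves admit a common Borel velocity field `v : ℝ × ℝ^d → ℝ^d`,
with `v(t, γ_j(t)) = g_j(t)` for a.e. `t ∈ (0,1)` and every `j`. -/
theorem exists_common_velocity_field
    {d N : ℕ} (hd : 1 ≤ d) (hN : 1 ≤ N)
    (γ g : Fin N → ℝ → EuclideanSpace ℝ (Fin d))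
    (h : ∀ j, IsAC2 (γ j) (g j)) :
    ∃ v : ℝ × EuclideanSpace ℝ (Fin d) → EuclideanSpace ℝ (Fin d),
      Measurable v ∧
      ∀ j, ∀ᵐ t ∂(volume.restrict (Ioo (0:ℝ) 1)), v (t, γ j t) = g j t := by
  classical
  haveI : IsFiniteMeasure (volume.restrict (Ioc (0:ℝ) 1)) :=
    ⟨by rw [Measure.restrict_apply_univ, Real.volume_Ioc]; exact ENNReal.ofReal_lt_top⟩
  -- measurable representatives of the derivatives
  set gm : Fin N → ℝ → EuclideanSpace ℝ (Fin d) := fun j => ((h j).1.1).mk (g j) with hgm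
  have hgm_sm : ∀ j, StronglyMeasurable (gm j) := fun j => (h j).1.1.stronglyMeasurable_mk
  have hgm_ae : ∀ j, g j =ᵐ[volume.restrict (Ioc (0:ℝ) 1)] gm j := fun j => (h j).1.1.ae_eq_mk
  set gI : Fin N → ℝ → EuclideanSpace ℝ (Fin d) := fun j => (Ioc (0:ℝ) 1).indicator (gm j) with hgI
  have hgI_meas : ∀ j, Measurable (gI j) := fun j =>
    ((hgm_sm j).measurable).indicator measurableSet_Ioc
  have hgI_int : ∀ j, Integrable (gI j) volume := by
    intro j
    have hmem : MemLp (gm j) 2 (volume.restrict (Ioc (0:ℝ) 1)) :=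
      (h j).1.ae_eq (hgm_ae j)
    exact (integrable_indicator_iff measurableSet_Ioc).2 (hmem.integrable one_le_two)
  set F : Fin N → ℝ → EuclideanSpace ℝ (Fin d) := fun j t => ∫ s in (0:ℝ)..t, gI j s with hF
  set γ' : Fin N → ℝ → EuclideanSpace ℝ (Fin d) := fun j t => γ j 0 + F j t with hγ'
  have hγ'_cont : ∀ j, Continuous (γ' j) := fun j =>
    continuous_const.add ((hgI_int j).continuous_primitive 0)
  have hγ'_meas : ∀ j, Measurable (γ' j) := fun j => (hγ'_cont j).measurable
  -- pairwise compatibility of derivatives on intersections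
  have hpair : ∀ j k : Fin N, ∀ᵐ t ∂(volume : Measure ℝ),
      γ' k t = γ' j t → gI k t = gI j t := by
    intro j k
    filter_upwards [ae_hasDerivAt_primitive (E := EuclideanSpace ℝ (Fin d)) (hgI_int k),
      ae_hasDerivAt_primitive (E := EuclideanSpace ℝ (Fin d)) (hgI_int j),
      ae_accPt_of_mem {t : ℝ | γ' k t = γ' j t}] with t hk hj ha hEq
    have hD : HasDerivAt (fun s => γ' k s - γ' j s) (gI k t - gI j t) t :=
      (hk.const_add (γ k 0)).sub (hj.const_add (γ j 0))
    have hc := deriv_eq_zero_of_constant_on hD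
      (fun s hs => by
        show γ' k s - γ' j s = γ' k t - γ' j t
        rw [sub_eq_zero.2 hs, sub_eq_zero.2 hEq])
      (ha hEq)
    exact sub_eq_zero.1 hc
  -- the level sets used to define the velocity field
  set S : Fin N → Set (ℝ × EuclideanSpace ℝ (Fin d)) :=
    fun j => {q : ℝ × EuclideanSpace ℝ (Fin d) | γ' j q.1 = q.2 ∧ ∀ k, k < j → γ' k q.1 ≠ q.2} with hS
  have hlev : ∀ k : Fin N, MeasurableSet {q : ℝ × EuclideanSpace ℝ (Fin d) | γ' k q.1 = q.2} := by
    intro k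
    have : {q : ℝ × EuclideanSpace ℝ (Fin d) | γ' k q.1 = q.2} = (fun q : ℝ × EuclideanSpace ℝ (Fin d) => γ' k q.1 - q.2) ⁻¹' {0} := by
      ext q; simp [sub_eq_zero]
    rw [this]
    exact (((hγ'_meas k).comp measurable_fst).sub measurable_snd) (measurableSet_singleton 0)
  have hSm : ∀ j, MeasurableSet (S j) := by
    intro j
    have : S j = {q : ℝ × EuclideanSpace ℝ (Fin d) | γ' j q.1 = q.2} ∩
        ⋂ (k : Fin N), ⋂ (_ : k < j), {q : ℝ × EuclideanSpace ℝ (Fin d) | γ' k q.1 = q.2}ᶜ := by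
      ext q
      simp only [hS, mem_setOf_eq, mem_inter_iff, mem_iInter, mem_compl_iff]
    rw [this]
    exact (hlev j).inter (MeasurableSet.iInter fun k => MeasurableSet.iInter fun _ =>
      (hlev k).compl)
  refine ⟨fun q => ∑ j : Fin N, (S j).indicator (fun q : ℝ × EuclideanSpace ℝ (Fin d) => gI j q.1) q, ?_, ?_⟩
  · exact Finset.measurable_sum _ fun j _ =>
      ((hgI_meas j).comp measurable_fst).indicator (hSm j)
  · intro j
    have h1 : ∀ᵐ t ∂(volume.restrict (Ioo (0:ℝ) 1)), t ∈ Ioo (0:ℝ) 1 :=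
      ae_restrict_mem measurableSet_Ioo
    have h2 : ∀ᵐ t ∂(volume.restrict (Ioo (0:ℝ) 1)), g j t = gm j t :=
      ae_restrict_of_ae_restrict_of_subset Ioo_subset_Ioc_self (hgm_ae j)
    have h3 : ∀ᵐ t ∂(volume.restrict (Ioo (0:ℝ) 1)),
        ∀ k, γ' k t = γ' j t → gI k t = gI j t :=
      ae_restrict_of_ae (ae_all_iff.2 fun k => hpair j k)
    filter_upwards [h1, h2, h3] with t ht hgt hkt
    -- the curve agrees with its continuous representative
    have hIoc : t ∈ Ioc (0:ℝ) 1 := ⟨ht.1, ht.2.le⟩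
    have hint_eq : ∫ s in (0:ℝ)..t, g j s = F j t := by
      have hgg : ∀ᵐ s ∂(volume : Measure ℝ), s ∈ Ι (0:ℝ) t → g j s = gI j s := by
        filter_upwards [ae_imp_of_ae_restrict (hgm_ae j)] with s hs hsΙ
        rw [uIoc_of_le ht.1.le] at hsΙ
        have hs1 : s ∈ Ioc (0:ℝ) 1 := ⟨hsΙ.1, hsΙ.2.trans ht.2.le⟩
        rw [hs hs1, hgI]
        simp [indicator_of_mem hs1]
      exact intervalIntegral.integral_congr_ae hgg
    have hγt : γ j t = γ' j t := by
      rw [(h j).2 t ⟨ht.1.le, ht.2.le⟩, hint_eq]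
    rw [hγt]
    -- evaluate the sum at the least index hitting the point
    set P : Finset (Fin N) := Finset.univ.filter (fun k => γ' k t = γ' j t) with hP
    have hjP : j ∈ P := by simp [hP]
    have hPne : P.Nonempty := ⟨j, hjP⟩
    set j₀ := P.min' hPne with hj₀def
    have hj₀ : γ' j₀ t = γ' j t := (Finset.mem_filter.1 (P.min'_mem hPne)).2
    have hmin : ∀ k, k < j₀ → γ' k t ≠ γ' j t := by
      intro k hk hcon
      have : k ∈ P := by simp [hP, hcon]
      exact absurd (P.min'_le k this) (not_le.2 hk)
    have hsum : (∑ i : Fin N, (S i).indicator (fun q : ℝ × EuclideanSpace ℝ (Fin d) => gI i q.1) (t, γ' j t))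
        = gI j₀ t := by
      rw [Finset.sum_eq_single j₀]
      · have hm : (t, γ' j t) ∈ S j₀ := by
          simp only [hS, mem_setOf_eq]
          exact ⟨hj₀, hmin⟩
        exact indicator_of_mem hm _
      · intro i _ hi
        apply indicator_of_notMem
        intro hcon
        rcases hcon with ⟨hic, hiall⟩
        have hiP : i ∈ P := by simp [hP, hic]
        have : j₀ < i := lt_of_le_of_ne (P.min'_le i hiP) (Ne.symm hi)
        exact hiall j₀ this hj₀
      · intro hj'
        exact absurd (Finset.mem_univ j₀) hj'
    rw [hsum, hkt j₀ hj₀, hgI]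
    simp only [indicator_of_mem hIoc]
    exact hgt.symm
end

section
/- Let d ≥ 1, α, β > 0, N ≥ 1, and for j = 1,…,N let c_j > 0 and let γ_j : [0,1] → ℝ^d be AC² with derivative g_j; set a_j := ((β/2) ∫₀¹ |g_j(t)|² dt + α)⁻¹. Let ρ be the finite positive Borel measure on ℝ × ℝ^d given by ρ := Σ_{j=1}^N c_j a_j (T_j)_# λ, where λ is Lebesgue measure on [0,1] and T_j(t) := (t, γ_j(t)). Then ρ(ℝ × ℝ^d) = Σ_j c_j a_j, and for every Borel map v : ℝ × ℝ^d → ℝ^d satisfying, for each j, v(t, γ_j(t)) = g_j(t) for a.e. t ∈ (0,1), one has (β/2) ∫_{ℝ × ℝ^d} |v|² dρ + α · ρ(ℝ × ℝ^d) = Σ_{j=1}^N c_j. (Lemma 2.2: the optimal-transport regularizer J_{α,β} takes the value Σ_j c_j on the conic combination Σ_j c_j μ_{γ_j} of atoms; in particular J_{α,β}(μ_{γ_j}) = 1.) -/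
open MeasureTheory Set
open scoped ENNReal

lemma IsAC2.aemeasurable_curve {d : ℕ} {γ g : ℝ → EuclideanSpace ℝ (Fin d)}
    (h : IsAC2 γ g) : AEMeasurable γ (volume.restrict (Icc (0:ℝ) 1)) := by
  obtain ⟨h2, heq⟩ := h
  have hu : uIcc (0:ℝ) 1 = Icc (0:ℝ) 1 := uIcc_of_le (by norm_num)
  have hint : IntegrableOn g (Icc (0:ℝ) 1) volume := by
    have h := h2.integrable (by norm_num : (1:ℝ≥0∞) ≤ 2)
    rw [Measure.restrict_congr_set Ioc_ae_eq_Icc] at h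
    exact h
  have hcont : ContinuousOn (fun t => γ 0 + ∫ s in (0:ℝ)..t, g s) (Icc (0:ℝ) 1) := by
    have h := intervalIntegral.continuousOn_primitive_interval (a := (0:ℝ)) (b := 1)
      (f := g) (μ := volume) (hu ▸ hint)
    rw [hu] at h
    exact continuousOn_const.add h
  have hae : γ =ᵐ[volume.restrict (Icc (0:ℝ) 1)] fun t => γ 0 + ∫ s in (0:ℝ)..t, g s := by
    filter_upwards [ae_restrict_mem measurableSet_Icc] with t ht using heq t ht
  exact (hcont.aemeasurable measurableSet_Icc).congr hae.symm


/-- Lemma 2.2: the optimal-transport regularizer `J_{α,β}` takes the value `Σ_j c_j` on the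
conic combination `Σ_j c_j μ_{γ_j}` of atoms.  Here `ρ = Σ_j c_j a_j (t ↦ (t,γ_j(t)))_# λ`
has total mass `Σ_j c_j a_j`, and for every Borel velocity field `v` compatible with all the
curves, `(β/2) ∫ |v|² dρ + α ρ(ℝ×ℝ^d) = Σ_j c_j`. -/
theorem regularizer_linear_on_atoms
    {d N : ℕ} (hd : 1 ≤ d) (hN : 1 ≤ N)
    (α β : ℝ) (hα : 0 < α) (hβ : 0 < β)
    (c : Fin N → ℝ) (hc : ∀ j, 0 < c j)
    (γ g : Fin N → ℝ → EuclideanSpace ℝ (Fin d))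
    (hγ : ∀ j, IsAC2 (γ j) (g j))
    (a : Fin N → ℝ)
    (ha : ∀ j, a j = ((β / 2) * (∫ t in (0:ℝ)..1, ‖g j t‖ ^ 2) + α)⁻¹)
    (ρ : Measure (ℝ × EuclideanSpace ℝ (Fin d)))
    (hρ : ρ = ∑ j, ENNReal.ofReal (c j * a j) •
        Measure.map (fun t => (t, γ j t)) (volume.restrict (Icc (0:ℝ) 1))) :
    ρ univ = ENNReal.ofReal (∑ j, c j * a j) ∧
    ∀ v : ℝ × EuclideanSpace ℝ (Fin d) → EuclideanSpace ℝ (Fin d),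
      Measurable v →
      (∀ j, ∀ᵐ t ∂(volume.restrict (Ioo (0:ℝ) 1)), v (t, γ j t) = g j t) →
      (β / 2) * (∫ p, ‖v p‖ ^ 2 ∂ρ) + α * (ρ univ).toReal = ∑ j, c j := by
  set μ := volume.restrict (Icc (0:ℝ) 1) with hμ
  have hT : ∀ j, AEMeasurable (fun t => (t, γ j t)) μ := fun j =>
    aemeasurable_id.prodMk (hγ j).aemeasurable_curve
  -- integrability of ‖g‖²
  have hintsq : ∀ j, Integrable (fun t => ‖g j t‖ ^ 2) μ := by
    intro j
    have h1 : MemLp (fun t => ‖g j t‖) 2 (volume.restrict (Ioc (0:ℝ) 1)) := (hγ j).1.norm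
    have h2 := h1.integrable_sq
    rwa [Measure.restrict_congr_set Ioc_ae_eq_Icc] at h2
  -- the interval integral equals the integral over Icc w.r.t. μ
  have hIeq : ∀ j, (∫ t in (0:ℝ)..1, ‖g j t‖ ^ 2) = ∫ t, ‖g j t‖ ^ 2 ∂μ := by
    intro j
    rw [intervalIntegral.integral_of_le (by norm_num : (0:ℝ) ≤ 1), hμ,
      Measure.restrict_congr_set Ioc_ae_eq_Icc]
  set I : Fin N → ℝ := fun j => ∫ t, ‖g j t‖ ^ 2 ∂μ with hI
  have hInonneg : ∀ j, 0 ≤ I j := fun j => integral_nonneg fun t => sq_nonneg _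
  have hApos : ∀ j, 0 < (β / 2) * I j + α := fun j =>
    add_pos_of_nonneg_of_pos (mul_nonneg (by positivity) (hInonneg j)) hα
  have ha' : ∀ j, a j = ((β / 2) * I j + α)⁻¹ := fun j => by rw [ha j, hIeq j]
  have hapos : ∀ j, 0 < a j := fun j => (ha' j).symm ▸ inv_pos.2 (hApos j)
  have hca : ∀ j, 0 ≤ c j * a j := fun j => le_of_lt (mul_pos (hc j) (hapos j))
  -- mass of each mapped measure
  have hmass : ∀ j, Measure.map (fun t => (t, γ j t)) μ univ = 1 := by
    intro j
    rw [Measure.map_apply_of_aemeasurable (hT j) MeasurableSet.univ]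
    simp [hμ, Real.volume_Icc]
  have hρuniv : ρ univ = ENNReal.ofReal (∑ j, c j * a j) := by
    rw [hρ, ENNReal.ofReal_sum_of_nonneg (fun j _ => hca j)]
    rw [Measure.finset_sum_apply]
    exact Finset.sum_congr rfl fun j _ => by
      rw [Measure.smul_apply, hmass j, smul_eq_mul, mul_one]
  refine ⟨hρuniv, fun v hvmeas hv => ?_⟩
  have hfmeas : Measurable fun p : ℝ × EuclideanSpace ℝ (Fin d) => ‖v p‖ ^ 2 :=
    hvmeas.norm.pow_const 2
  -- a.e. equality on μ
  have hvg : ∀ j, (fun t => ‖v (t, γ j t)‖ ^ 2) =ᵐ[μ] fun t => ‖g j t‖ ^ 2 := by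
    intro j
    have h := hv j
    rw [Measure.restrict_congr_set Ioo_ae_eq_Icc] at h
    filter_upwards [h] with t ht using by rw [ht]
  have hint : ∀ j, Integrable (fun p : ℝ × EuclideanSpace ℝ (Fin d) => ‖v p‖ ^ 2)
      (Measure.map (fun t => (t, γ j t)) μ) := by
    intro j
    rw [integrable_map_measure hfmeas.aestronglyMeasurable (hT j)]
    exact (hintsq j).congr (hvg j).symm
  have hintegral : ∀ j, (∫ p, ‖v p‖ ^ 2 ∂(Measure.map (fun t => (t, γ j t)) μ)) = I j := by
    intro j
    rw [integral_map (hT j) hfmeas.aestronglyMeasurable]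
    exact integral_congr_ae (hvg j)
  have hsum : (∫ p, ‖v p‖ ^ 2 ∂ρ) = ∑ j, (c j * a j) * I j := by
    rw [hρ, integral_finset_sum_measure (fun j _ => ((hint j).smul_measure ENNReal.ofReal_ne_top))]
    refine Finset.sum_congr rfl fun j _ => ?_
    rw [integral_smul_measure, hintegral j, ENNReal.toReal_ofReal (hca j), smul_eq_mul]
  rw [hsum, hρuniv, ENNReal.toReal_ofReal (Finset.sum_nonneg fun j _ => hca j),
    Finset.mul_sum, Finset.mul_sum, ← Finset.sum_add_distrib]
  refine Finset.sum_congr rfl fun j _ => ?_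
  have hkey : a j * ((β / 2) * I j + α) = 1 := by
    rw [ha' j]; exact inv_mul_cancel₀ (ne_of_gt (hApos j))
  calc (β / 2) * (c j * a j * I j) + α * (c j * a j)
      = c j * (a j * ((β / 2) * I j + α)) := by ring
    _ = c j := by rw [hkey, mul_one]
end

section
/- Let d ≥ 1, α, β > 0, and let E ⊆ ℝ^d be nonempty and compact. Let w : (0,1) × ℝ^d → ℝ be Carathéodory with w(t,x) = 0 for all x ∉ E and a.e. t ∈ (0,1), and assume ‖w‖ := (∫₀¹ (sup_{x ∈ ℝ^d} |w(t,x)|)² dt)^{1/2} < ∞. Let γ : [0,1] → ℝ^d be AC² with derivative g and suppose F(γ) ≤ M for some M < 0. Then ∫₀¹ |g(t)|² dt ≤ (2/β)( ‖w‖/(−M) − α ) and sup_{t ∈ [0,1]} |γ(t)| ≤ (∫₀¹ |g(t)|² dt)^{1/2} + max_{x ∈ E} |x|. (Boundedness of the sublevel sets {F ≤ M} of the insertion-step functional, from the proof of Lemma A.8 on gradient descent.) -/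
open MeasureTheory Set

/-- `u : (0,1) × ℝ^d → F` is Carathéodory: measurable in `t` for every `x`, and continuous in
`x` for a.e. `t ∈ (0,1)`. -/
def Caratheodory {E F : Type*} [TopologicalSpace E] [TopologicalSpace F] [MeasurableSpace F]
    (u : ℝ → E → F) : Prop :=
  (∀ x, Measurable fun t => u t x) ∧
  ∀ᵐ t ∂(volume.restrict (Ioo (0:ℝ) 1)), Continuous (u t)

/-- The linear part `W(γ) := −∫₀¹ w(t, γ(t)) dt` of the insertion-step functional. -/
noncomputable def Wc {d : ℕ} (w : ℝ → EuclideanSpace ℝ (Fin d) → ℝ)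
    (γ : ℝ → EuclideanSpace ℝ (Fin d)) : ℝ :=
  -∫ t in (0:ℝ)..1, w t (γ t)

/-- `L(γ) := (β/2) ∫₀¹ |γ̇(t)|² dt + α`. -/
noncomputable def Lc {d : ℕ} (α β : ℝ) (g : ℝ → EuclideanSpace ℝ (Fin d)) : ℝ :=
  (β / 2) * (∫ t in (0:ℝ)..1, ‖g t‖ ^ 2) + α

/-- The insertion-step functional `F(γ) := W(γ)/L(γ)`. -/
noncomputable def Fc {d : ℕ} (α β : ℝ) (w : ℝ → EuclideanSpace ℝ (Fin d) → ℝ)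
    (γ g : ℝ → EuclideanSpace ℝ (Fin d)) : ℝ :=
  Wc w γ / Lc α β g

private lemma prob_Ioc : IsProbabilityMeasure (volume.restrict (Ioc (0:ℝ) 1)) := by
  constructor
  rw [Measure.restrict_apply_univ]
  simp

private lemma sq_int_le {f : ℝ → ℝ}
    (h1 : Integrable f (volume.restrict (Ioc (0:ℝ) 1)))
    (h2 : Integrable (fun t => f t ^ 2) (volume.restrict (Ioc (0:ℝ) 1))) :
    (∫ t, f t ∂(volume.restrict (Ioc (0:ℝ) 1))) ^ 2
      ≤ ∫ t, f t ^ 2 ∂(volume.restrict (Ioc (0:ℝ) 1)) := by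
  haveI := prob_Ioc
  set μ := volume.restrict (Ioc (0:ℝ) 1) with hμ
  set c := ∫ t, f t ∂μ with hc
  have h0 : 0 ≤ ∫ t, (f t - c) ^ 2 ∂μ := integral_nonneg fun t => sq_nonneg _
  have hexp : (fun t => (f t - c) ^ 2)
      = fun t => (f t ^ 2 - (2 * c) * f t) + c ^ 2 := by funext t; ring
  rw [hexp, integral_add (f := fun t => f t ^ 2 - (2 * c) * f t) (g := fun _ => c ^ 2)
      (h2.sub (h1.const_mul _)) (integrable_const _),
      integral_sub (f := fun t => f t ^ 2) (g := fun t => (2 * c) * f t) h2 (h1.const_mul _),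
      integral_const_mul, integral_const] at h0
  simp only [measure_univ, probReal_univ, ENNReal.toReal_one, smul_eq_mul, one_mul] at h0
  nlinarith [h0]

private lemma l1_le_sqrt_l2 {f : ℝ → ℝ} (hf : ∀ t, 0 ≤ f t)
    (h2 : Integrable (fun t => f t ^ 2) (volume.restrict (Ioc (0:ℝ) 1))) :
    Integrable f (volume.restrict (Ioc (0:ℝ) 1)) ∧
    (∫ t, f t ∂(volume.restrict (Ioc (0:ℝ) 1)))
      ≤ Real.sqrt (∫ t, f t ^ 2 ∂(volume.restrict (Ioc (0:ℝ) 1))) := by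
  haveI := prob_Ioc
  set μ := volume.restrict (Ioc (0:ℝ) 1) with hμ
  have hmeas : AEStronglyMeasurable f μ := by
    have hfe : f = fun t => Real.sqrt (f t ^ 2) := by
      funext t; rw [Real.sqrt_sq (hf t)]
    rw [hfe]
    exact Real.continuous_sqrt.comp_aestronglyMeasurable h2.aestronglyMeasurable
  have hint : Integrable f μ := by
    refine Integrable.mono' (((h2.add (integrable_const 1)).const_mul (1/2))) hmeas ?_
    filter_upwards with t
    rw [Real.norm_of_nonneg (hf t)]
    simp only [Pi.add_apply]
    nlinarith [sq_nonneg (f t - 1)]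
  refine ⟨hint, ?_⟩
  have h := sq_int_le hint h2
  have hnn : 0 ≤ ∫ t, f t ∂μ := integral_nonneg hf
  rw [← Real.sqrt_sq hnn]
  exact Real.sqrt_le_sqrt h


/-- Boundedness of the sublevel sets `{F ≤ M}`, `M < 0`, of the insertion-step functional
(from the proof of Lemma A.8): `∫₀¹|γ̇|² ≤ (2/β)(‖w‖/(−M) − α)` and
`sup_t |γ(t)| ≤ (∫₀¹|γ̇|²)^{1/2} + max_{x∈E}|x|`. -/
theorem sublevel_sets_of_F_bounded
    {d : ℕ} (hd : 1 ≤ d) (α β : ℝ) (hα : 0 < α) (hβ : 0 < β)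
    (E : Set (EuclideanSpace ℝ (Fin d))) (hE : E.Nonempty) (hEc : IsCompact E)
    (w : ℝ → EuclideanSpace ℝ (Fin d) → ℝ)
    (hCar : Caratheodory w)
    (hsupp : ∀ᵐ t ∂(volume.restrict (Ioo (0:ℝ) 1)), ∀ x ∉ E, w t x = 0)
    (hInt : IntervalIntegrable (fun t => (⨆ x, |w t x|) ^ 2) volume 0 1)
    (γ g : ℝ → EuclideanSpace ℝ (Fin d)) (hγ : IsAC2 γ g)
    (M : ℝ) (hM : M < 0) (hFγ : Fc α β w γ g ≤ M) :
    (∫ t in (0:ℝ)..1, ‖g t‖ ^ 2) ≤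
      (2 / β) * (Real.sqrt (∫ t in (0:ℝ)..1, (⨆ x, |w t x|) ^ 2) / (-M) - α) ∧
    ∀ t ∈ Icc (0:ℝ) 1,
      ‖γ t‖ ≤ Real.sqrt (∫ t in (0:ℝ)..1, ‖g t‖ ^ 2) + sSup ((fun x => ‖x‖) '' E) := by
  obtain ⟨hg2, hγeq⟩ := hγ
  have hres : volume.restrict (Ioo (0:ℝ) 1) = volume.restrict (Ioc (0:ℝ) 1) :=
    Measure.restrict_congr_set Ioo_ae_eq_Ioc
  set μ := volume.restrict (Ioc (0:ℝ) 1) with hμdef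
  haveI : IsProbabilityMeasure μ := prob_Ioc
  rw [hres] at hsupp
  have hCont : ∀ᵐ t ∂μ, Continuous (w t) := by rw [← hres]; exact hCar.2
  -- sup function
  set Fw : ℝ → ℝ := fun t => ⨆ x, |w t x| with hFwdef
  have hFw0 : ∀ t, 0 ≤ Fw t := by
    intro t
    by_cases h : BddAbove (range fun x => |w t x|)
    · exact le_trans (abs_nonneg (w t 0)) (le_ciSup h 0)
    · exact le_of_eq (Real.iSup_of_not_bddAbove h).symm
  have hFw2int : Integrable (fun t => Fw t ^ 2) μ :=
    (intervalIntegrable_iff_integrableOn_Ioc_of_le zero_le_one).mp hInt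
  obtain ⟨hFwint, hFwle⟩ := l1_le_sqrt_l2 hFw0 hFw2int
  -- g integrability
  have hg2int : Integrable (fun t => ‖g t‖ ^ 2) μ := by
    have h := hg2.integrable_norm_rpow (by norm_num) (by norm_num)
    simpa [Real.rpow_natCast] using h
  obtain ⟨hgnint, hgnle⟩ := l1_le_sqrt_l2 (fun t => norm_nonneg (g t)) hg2int
  have hgint : Integrable g μ :=
    memLp_one_iff_integrable.mp (hg2.mono_exponent (by norm_num))
  have hgII : IntervalIntegrable g volume 0 1 :=
    (intervalIntegrable_iff_integrableOn_Ioc_of_le zero_le_one).mpr hgint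
  have hgnII : IntervalIntegrable (fun t => ‖g t‖) volume 0 1 :=
    (intervalIntegrable_iff_integrableOn_Ioc_of_le zero_le_one).mpr hgnint
  set I := ∫ t in (0:ℝ)..1, ‖g t‖ ^ 2 with hIdef
  have hIμ : I = ∫ t, ‖g t‖ ^ 2 ∂μ := intervalIntegral.integral_of_le zero_le_one
  have hI0 : 0 ≤ I := by
    rw [hIμ]; exact integral_nonneg fun t => sq_nonneg _
  have hL : 0 < Lc α β g := by
    have : Lc α β g = β / 2 * I + α := rfl
    rw [this]; positivity
  have hWle : Wc w γ ≤ M * Lc α β g := (div_le_iff₀ hL).mp hFγ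
  have hWneg : Wc w γ < 0 := lt_of_le_of_lt hWle (mul_neg_of_neg_of_pos hM hL)
  -- integrability of t ↦ w t (γ t)
  have hwγint : Integrable (fun t => w t (γ t)) μ := by
    by_contra h
    have hz : Wc w γ = 0 := by
      rw [Wc, intervalIntegral.integral_undef, neg_zero]
      intro hI'
      exact h ((intervalIntegrable_iff_integrableOn_Ioc_of_le zero_le_one).mp hI')
    linarith
  have hWeq : Wc w γ = -∫ t, w t (γ t) ∂μ := by
    rw [Wc, intervalIntegral.integral_of_le zero_le_one]
  -- a.e. bddAbove and pointwise bound
  have hbd : ∀ᵐ t ∂μ, BddAbove (range fun x => |w t x|) := by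
    filter_upwards [hCont, hsupp] with t hc hs
    have hcE : IsCompact ((fun x => |w t x|) '' E) := hEc.image (continuous_abs.comp hc)
    refine (hcE.bddAbove.insert 0).mono ?_
    rintro r ⟨x, rfl⟩
    by_cases hx : x ∈ E
    · exact Or.inr (mem_image_of_mem _ hx)
    · left; simp [hs x hx]
  have hptw : ∀ᵐ t ∂μ, w t (γ t) ≤ Fw t := by
    filter_upwards [hbd] with t hb
    exact (le_abs_self _).trans (le_ciSup hb (γ t))
  have hmono : ∫ t, w t (γ t) ∂μ ≤ ∫ t, Fw t ∂μ := integral_mono_ae hwγint hFwint hptw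
  -- sqrt S
  set S := ∫ t in (0:ℝ)..1, (⨆ x, |w t x|) ^ 2 with hSdef
  have hSμ : S = ∫ t, Fw t ^ 2 ∂μ := intervalIntegral.integral_of_le zero_le_one
  have hkey : (-M) * Lc α β g ≤ Real.sqrt S := by
    rw [hSμ]
    have h1 : (-M) * Lc α β g ≤ -(Wc w γ) := by nlinarith [hWle]
    rw [hWeq, neg_neg] at h1
    exact h1.trans (hmono.trans hFwle)
  constructor
  · -- first bound
    have h2 : β / 2 * I + α ≤ Real.sqrt S / (-M) := by
      rw [le_div_iff₀ (neg_pos.mpr hM)]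
      have : Lc α β g = β / 2 * I + α := rfl
      calc (β / 2 * I + α) * (-M) = (-M) * Lc α β g := by rw [this]; ring
        _ ≤ Real.sqrt S := hkey
    have hb2 : 2 / β * (β / 2 * I) = I := by field_simp
    calc I = 2 / β * (β / 2 * I) := hb2.symm
      _ ≤ 2 / β * (Real.sqrt S / (-M) - α) := by
          apply mul_le_mul_of_nonneg_left (by linarith) (by positivity)
  · -- second bound
    have hex : ∃ t₀ ∈ Icc (0:ℝ) 1, γ t₀ ∈ E := by
      by_contra hcon
      push_neg at hcon
      have hz : ∀ᵐ t ∂μ, w t (γ t) = 0 := by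
        filter_upwards [hsupp, ae_restrict_mem measurableSet_Ioc] with t hs ht
        exact hs (γ t) (hcon t ⟨le_of_lt ht.1, ht.2⟩)
      have h0 : ∫ t, w t (γ t) ∂μ = 0 := integral_eq_zero_of_ae hz
      rw [hWeq, h0, neg_zero] at hWneg
      exact lt_irrefl 0 hWneg
    obtain ⟨t₀, ht₀, ht₀E⟩ := hex
    intro t ht
    have huIcc : ∀ s ∈ Icc (0:ℝ) 1, uIcc (0:ℝ) s ⊆ uIcc (0:ℝ) 1 := by
      intro s hs
      apply uIcc_subset_uIcc left_mem_uIcc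
      rw [uIcc_of_le zero_le_one]; exact hs
    have hsub : γ t - γ t₀ = ∫ s in t₀..t, g s := by
      rw [hγeq t ht, hγeq t₀ ht₀, add_sub_add_left_eq_sub]
      exact intervalIntegral.integral_interval_sub_left
        (hgII.mono_set (huIcc t ht)) (hgII.mono_set (huIcc t₀ ht₀))
    have hnormle : ‖γ t - γ t₀‖ ≤ ∫ s in (0:ℝ)..1, ‖g s‖ := by
      rw [hsub]
      refine le_trans intervalIntegral.norm_integral_le_abs_integral_norm ?_
      have h1 : |∫ s in t₀..t, ‖g s‖| ≤ |∫ s in (0:ℝ)..1, ‖g s‖| := by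
        apply intervalIntegral.abs_integral_mono_interval ?_ ?_ hgnII
        · rw [uIoc_of_le zero_le_one]
          rw [Set.uIoc]
          exact Ioc_subset_Ioc (le_inf ht₀.1 ht.1) (sup_le ht₀.2 ht.2)
        · exact ae_of_all _ fun s => norm_nonneg _
      have h2 : 0 ≤ ∫ s in (0:ℝ)..1, ‖g s‖ :=
        intervalIntegral.integral_nonneg zero_le_one fun s _ => norm_nonneg _
      rwa [abs_of_nonneg h2] at h1
    have hγt₀ : ‖γ t₀‖ ≤ sSup ((fun x => ‖x‖) '' E) :=
      le_csSup (hEc.image continuous_norm).bddAbove ⟨γ t₀, ht₀E, rfl⟩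
    have hint2 : (∫ s in (0:ℝ)..1, ‖g s‖) ≤ Real.sqrt I := by
      rw [hIμ]
      rw [intervalIntegral.integral_of_le zero_le_one]
      exact hgnle
    calc ‖γ t‖ = ‖(γ t - γ t₀) + γ t₀‖ := by rw [sub_add_cancel]
      _ ≤ ‖γ t - γ t₀‖ + ‖γ t₀‖ := norm_add_le _ _
      _ ≤ Real.sqrt I + sSup ((fun x => ‖x‖) '' E) := by
          have := hnormle.trans hint2
          linarith
end

section
/- Let d ≥ 1 and let w : (0,1) × ℝ^d → ℝ be such that w(t,·) is differentiable with Lipschitz gradient for a.e. t, ∇_x w is Carathéodory, and ‖w‖_{1,1} < ∞. For an AC² curve ζ with derivative k write ‖ζ‖_{H¹} := (∫₀¹ |ζ(t)|² dt + ∫₀¹ |k(t)|² dt)^{1/2}. Then for all AC² curves γ¹, γ², η : [0,1] → ℝ^d one has |∫₀¹ (∇_x w(t, γ¹(t)) − ∇_x w(t, γ²(t))) · η(t) dt| ≤ √2 · ‖w‖_{1,1} · ‖γ¹ − γ²‖_{H¹} · ‖η‖_{H¹}. (Global Lipschitz continuity of the derivative of W with respect to the H¹ norm; estimate (gateaux:4)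 in Proposition A.6.) -/
open MeasureTheory Set
open scoped RealInnerProductSpace

/-- The (smallest) Lipschitz constant of a map. -/
noncomputable def lipConst {E F : Type*} [PseudoMetricSpace E] [PseudoMetricSpace F]
    (f : E → F) : ℝ :=
  sInf {K : ℝ | 0 ≤ K ∧ LipschitzWith (Real.toNNReal K) f}

/-- The `C^{1,1}` norm `‖φ‖_{C^{1,1}} := sup|φ| + sup|∇φ| + Lip(∇φ)`. -/
noncomputable def C11norm {d : ℕ} (φ : EuclideanSpace ℝ (Fin d) → ℝ) : ℝ :=
  (⨆ x, |φ x|) + (⨆ x, ‖gradient φ x‖) + lipConst (gradient φ)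

/-- `‖w‖_{1,1} := (∫₀¹ ‖w_t‖²_{C^{1,1}} dt)^{1/2}`. -/
noncomputable def norm11 {d : ℕ} (w : ℝ → EuclideanSpace ℝ (Fin d) → ℝ) : ℝ :=
  Real.sqrt (∫ t in (0:ℝ)..1, (C11norm (w t)) ^ 2)

/-- The `H¹` norm of an AC² curve `ζ` with derivative `k`. -/
noncomputable def H1norm {d : ℕ} (ζ k : ℝ → EuclideanSpace ℝ (Fin d)) : ℝ :=
  Real.sqrt ((∫ t in (0:ℝ)..1, ‖ζ t‖ ^ 2) + ∫ t in (0:ℝ)..1, ‖k t‖ ^ 2)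

private lemma myCS {μ : Measure ℝ} (f g : ℝ → ℝ) (hf0 : 0 ≤ᵐ[μ] f) (hg0 : 0 ≤ᵐ[μ] g)
    (hf : MemLp f 2 μ) (hg : MemLp g 2 μ) :
    ∫ a, f a * g a ∂μ ≤ Real.sqrt (∫ a, f a ^ 2 ∂μ) * Real.sqrt (∫ a, g a ^ 2 ∂μ) := by
  have hpq : Real.HolderConjugate 2 2 := Real.HolderConjugate.two_two
  have h2 : ENNReal.ofReal (2:ℝ) = 2 := by norm_num
  have h := MeasureTheory.integral_mul_le_Lp_mul_Lq_of_nonneg hpq hf0 hg0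
    (by rwa [h2]) (by rwa [h2])
  have hrw : ∀ (F : ℝ → ℝ), (∫ a, F a ^ (2:ℝ) ∂μ) = ∫ a, F a ^ 2 ∂μ := by
    intro F
    congr 1
    funext a
    rw [show (2:ℝ) = ((2:ℕ):ℝ) by norm_num, Real.rpow_natCast]
  rw [hrw, hrw, ← Real.sqrt_eq_rpow, ← Real.sqrt_eq_rpow] at h
  exact h

private lemma lipConst_nonneg {E F : Type*} [PseudoMetricSpace E] [PseudoMetricSpace F]
    (f : E → F) : 0 ≤ lipConst f :=
  Real.sInf_nonneg fun _ hb => hb.1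

private lemma lipConst_le_C11norm {d : ℕ} (φ : EuclideanSpace ℝ (Fin d) → ℝ) :
    lipConst (gradient φ) ≤ C11norm φ := by
  have h1 : 0 ≤ ⨆ x, |φ x| := Real.iSup_nonneg fun x => abs_nonneg _
  have h2 : 0 ≤ ⨆ x : EuclideanSpace ℝ (Fin d), ‖gradient φ x‖ :=
    Real.iSup_nonneg fun x => norm_nonneg _
  unfold C11norm
  linarith

private lemma C11norm_nonneg {d : ℕ} (φ : EuclideanSpace ℝ (Fin d) → ℝ) :
    0 ≤ C11norm φ :=
  le_trans (lipConst_nonneg _) (lipConst_le_C11norm φ)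

private lemma ac2_rep {d : ℕ} {γ g : ℝ → EuclideanSpace ℝ (Fin d)} (hγ : IsAC2 γ g) :
    ∃ Γ : ℝ → EuclideanSpace ℝ (Fin d), Continuous Γ ∧ ∀ t ∈ Icc (0:ℝ) 1, Γ t = γ t := by
  have hint : IntegrableOn g (Icc (0:ℝ) 1) volume := by
    have h1 : IntegrableOn g (Ioc (0:ℝ) 1) volume := hγ.1.integrable (by norm_num)
    rwa [IntegrableOn, Measure.restrict_congr_set Ioc_ae_eq_Icc] at h1
  have hcont : ContinuousOn (fun t => γ 0 + ∫ s in (0:ℝ)..t, g s) (Icc (0:ℝ) 1) := by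
    have h := intervalIntegral.continuousOn_primitive_interval (a := 0) (b := 1) (f := g) (μ := volume)
      (by rwa [uIcc_of_le zero_le_one])
    rw [uIcc_of_le zero_le_one] at h
    exact continuousOn_const.add h
  set cl : ℝ → ℝ := fun t => max 0 (min t 1) with hcl
  have hclc : Continuous cl := continuous_const.max (continuous_id.min continuous_const)
  have hclmem : ∀ t, cl t ∈ Icc (0:ℝ) 1 := fun t =>
    ⟨le_max_left _ _, max_le zero_le_one (min_le_right _ _)⟩
  refine ⟨(fun t => γ 0 + ∫ s in (0:ℝ)..t, g s) ∘ cl, hcont.comp_continuous hclc hclmem, ?_⟩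
  intro t ht
  have hclt : cl t = t := by
    rw [hcl]; simp [min_eq_left ht.2, max_eq_right ht.1]
  simp only [Function.comp_apply, hclt]
  exact (hγ.2 t ht).symm

private lemma ac2_ii {d : ℕ} {γ g : ℝ → EuclideanSpace ℝ (Fin d)} (hγ : IsAC2 γ g)
    {a b : ℝ} (ha : a ∈ Icc (0:ℝ) 1) (hb : b ∈ Icc (0:ℝ) 1) :
    IntervalIntegrable g volume a b := by
  have h1 : IntegrableOn g (Ioc (0:ℝ) 1) volume := hγ.1.integrable (by norm_num)
  rw [intervalIntegrable_iff]
  refine h1.mono_set ?_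
  rw [Set.uIoc]
  exact Ioc_subset_Ioc (le_inf ha.1 hb.1) (sup_le ha.2 hb.2)

private lemma sup_bound {d : ℕ} {γ g : ℝ → EuclideanSpace ℝ (Fin d)} (hγ : IsAC2 γ g)
    {Γ : ℝ → EuclideanSpace ℝ (Fin d)} (hΓ : Continuous Γ)
    (hag : ∀ t ∈ Icc (0:ℝ) 1, Γ t = γ t) :
    ∀ t ∈ Icc (0:ℝ) 1, ‖Γ t‖ ≤ Real.sqrt 2 * H1norm γ g := by
  have mem0 : (0:ℝ) ∈ Icc (0:ℝ) 1 := left_mem_Icc.mpr zero_le_one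
  have mem1 : (1:ℝ) ∈ Icc (0:ℝ) 1 := right_mem_Icc.mpr zero_le_one
  have hI2nn : 0 ≤ ∫ t in (0:ℝ)..1, ‖g t‖ ^ 2 :=
    intervalIntegral.integral_nonneg zero_le_one fun t _ => by positivity
  obtain ⟨s₀, hs₀, hmin'⟩ := isCompact_Icc.exists_isMinOn (nonempty_Icc.mpr zero_le_one)
    (hΓ.norm.continuousOn : ContinuousOn (fun t => ‖Γ t‖) (Icc (0:ℝ) 1))
  have hmin : ∀ x ∈ Icc (0:ℝ) 1, ‖Γ s₀‖ ≤ ‖Γ x‖ := fun x hx => hmin' hx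
  have hΓsqint : IntegrableOn (fun t => ‖Γ t‖ ^ 2) (Ioc (0:ℝ) 1) volume :=
    (hΓ.norm.pow 2).integrableOn_Ioc
  have hI1eq : (∫ t in (0:ℝ)..1, ‖γ t‖ ^ 2) = ∫ t in Ioc (0:ℝ) 1, ‖Γ t‖ ^ 2 := by
    rw [intervalIntegral.integral_of_le zero_le_one]
    exact setIntegral_congr_fun measurableSet_Ioc fun t ht => by
      rw [hag t (Ioc_subset_Icc_self ht)]
  have hmin_sq : ‖Γ s₀‖ ^ 2 ≤ ∫ t in (0:ℝ)..1, ‖γ t‖ ^ 2 := by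
    rw [hI1eq]
    have hconst : ∫ _ in Ioc (0:ℝ) 1, ‖Γ s₀‖ ^ 2 = ‖Γ s₀‖ ^ 2 := by
      simp [Real.volume_Ioc]
    rw [← hconst]
    refine setIntegral_mono_on ((integrableOn_const_iff (C := ‖Γ s₀‖ ^ 2)).mpr (Or.inr ?_)) hΓsqint
      measurableSet_Ioc ?_
    · rw [Real.volume_Ioc]; norm_num
    · intro t ht
      exact pow_le_pow_left₀ (norm_nonneg _) (hmin t (Ioc_subset_Icc_self ht)) 2
  have hJnn : 0 ≤ ∫ t in (0:ℝ)..1, ‖g t‖ :=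
    intervalIntegral.integral_nonneg zero_le_one fun t _ => norm_nonneg _
  have hJsq : (∫ t in (0:ℝ)..1, ‖g t‖) ^ 2 ≤ ∫ t in (0:ℝ)..1, ‖g t‖ ^ 2 := by
    have hgL2 : MemLp (fun t => ‖g t‖) 2 (volume.restrict (Ioc (0:ℝ) 1)) := hγ.1.norm
    have h1L2 : MemLp (fun _ : ℝ => (1:ℝ)) 2 (volume.restrict (Ioc (0:ℝ) 1)) := by
      have : IsFiniteMeasure (volume.restrict (Ioc (0:ℝ) 1)) :=
        ⟨by rw [Measure.restrict_apply_univ, Real.volume_Ioc]; norm_num⟩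
      exact memLp_const 1
    have hcs := myCS _ _ (Filter.Eventually.of_forall fun t => norm_nonneg (g t))
      (Filter.Eventually.of_forall fun _ => zero_le_one) hgL2 h1L2
    have hint1 : (∫ _ in Ioc (0:ℝ) 1, (1:ℝ) ^ 2) = 1 := by simp [Real.volume_Ioc]
    have hJle : (∫ t in (0:ℝ)..1, ‖g t‖) ≤ Real.sqrt (∫ t in (0:ℝ)..1, ‖g t‖ ^ 2) := by
      rw [intervalIntegral.integral_of_le zero_le_one,
        intervalIntegral.integral_of_le zero_le_one]
      calc (∫ t in Ioc (0:ℝ) 1, ‖g t‖) = ∫ t in Ioc (0:ℝ) 1, ‖g t‖ * 1 := by simp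
        _ ≤ _ := hcs
        _ = Real.sqrt (∫ t in Ioc (0:ℝ) 1, ‖g t‖ ^ 2) := by
            rw [hint1, Real.sqrt_one, mul_one]
    calc (∫ t in (0:ℝ)..1, ‖g t‖) ^ 2
        ≤ Real.sqrt (∫ t in (0:ℝ)..1, ‖g t‖ ^ 2) ^ 2 := pow_le_pow_left₀ hJnn hJle 2
      _ = _ := Real.sq_sqrt (by rwa [intervalIntegral.integral_of_le zero_le_one] at hI2nn ⊢)
  intro t ht
  have hdiff : Γ t = Γ s₀ + ∫ s in s₀..t, g s := by
    have hsub := intervalIntegral.integral_interval_sub_left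
      (ac2_ii hγ mem0 ht) (ac2_ii hγ mem0 hs₀)
    rw [hag t ht, hag s₀ hs₀, hγ.2 t ht, hγ.2 s₀ hs₀, ← hsub]
    abel
  have hnorm_int : ‖(∫ s in s₀..t, g s : EuclideanSpace ℝ (Fin d))‖
      ≤ ∫ s in (0:ℝ)..1, ‖g s‖ := by
    refine intervalIntegral.norm_integral_le_abs_integral_norm.trans ?_
    have h01 : IntervalIntegrable (fun s => ‖g s‖) volume 0 1 := (ac2_ii hγ mem0 mem1).norm
    rcases le_total s₀ t with hst | hst
    · rw [abs_of_nonneg (intervalIntegral.integral_nonneg hst fun s _ => norm_nonneg _)]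
      exact intervalIntegral.integral_mono_interval hs₀.1 hst ht.2
        (Filter.Eventually.of_forall fun s => norm_nonneg _) h01
    · rw [intervalIntegral.integral_symm,
        abs_neg, abs_of_nonneg (intervalIntegral.integral_nonneg hst fun s _ => norm_nonneg _)]
      exact intervalIntegral.integral_mono_interval ht.1 hst hs₀.2
        (Filter.Eventually.of_forall fun s => norm_nonneg _) h01
  have hb : ‖Γ t‖ ≤ ‖Γ s₀‖ + ∫ s in (0:ℝ)..1, ‖g s‖ := by
    rw [hdiff]
    exact (norm_add_le _ _).trans (add_le_add le_rfl hnorm_int)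
  have hsq : ‖Γ t‖ ^ 2
      ≤ 2 * ((∫ s in (0:ℝ)..1, ‖γ s‖ ^ 2) + ∫ s in (0:ℝ)..1, ‖g s‖ ^ 2) := by
    have h1 : ‖Γ t‖ ^ 2 ≤ (‖Γ s₀‖ + ∫ s in (0:ℝ)..1, ‖g s‖) ^ 2 :=
      pow_le_pow_left₀ (norm_nonneg _) hb 2
    nlinarith [sq_nonneg (‖Γ s₀‖ - ∫ s in (0:ℝ)..1, ‖g s‖), hmin_sq, hJsq]
  calc ‖Γ t‖ = Real.sqrt (‖Γ t‖ ^ 2) := (Real.sqrt_sq (norm_nonneg _)).symm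
    _ ≤ Real.sqrt (2 * ((∫ s in (0:ℝ)..1, ‖γ s‖ ^ 2) + ∫ s in (0:ℝ)..1, ‖g s‖ ^ 2)) :=
        Real.sqrt_le_sqrt hsq
    _ = Real.sqrt 2 * H1norm γ g := Real.sqrt_mul (by norm_num) _

private lemma norm_sub_le_lipConst {d : ℕ}
    (f : EuclideanSpace ℝ (Fin d) → EuclideanSpace ℝ (Fin d))
    (hf : ∃ K : NNReal, LipschitzWith K f) (x y : EuclideanSpace ℝ (Fin d)) :
    ‖f x - f y‖ ≤ lipConst f * ‖x - y‖ := by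
  obtain ⟨K, hK⟩ := hf
  have hmem : (K:ℝ) ∈ {K : ℝ | 0 ≤ K ∧ LipschitzWith (Real.toNNReal K) f} :=
    ⟨K.coe_nonneg, by rwa [Real.toNNReal_coe]⟩
  rcases eq_or_ne x y with rfl | hxy
  · simp
  · have hd : 0 < ‖x - y‖ := by rwa [norm_sub_pos_iff]
    have hkey : ‖f x - f y‖ / ‖x - y‖ ≤ lipConst f := by
      refine le_csInf ⟨_, hmem⟩ ?_
      rintro b ⟨hb0, hbl⟩
      rw [div_le_iff₀ hd]
      calc ‖f x - f y‖ = dist (f x) (f y) := by rw [dist_eq_norm]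
        _ ≤ (Real.toNNReal b : ℝ) * dist x y := hbl.dist_le_mul x y
        _ = b * ‖x - y‖ := by rw [Real.coe_toNNReal b hb0, dist_eq_norm]
    calc ‖f x - f y‖ = ‖f x - f y‖ / ‖x - y‖ * ‖x - y‖ := by field_simp
      _ ≤ lipConst f * ‖x - y‖ := mul_le_mul_of_nonneg_right hkey hd.le

/-- Estimate (gateaux:4) in Proposition A.6: Lipschitz continuity of the derivative of `W`,
`|∫₀¹ (∇w_t(γ¹) − ∇w_t(γ²)) · η dt| ≤ √2 ‖w‖₁,₁ ‖γ¹ − γ²‖_{H¹} ‖η‖_{H¹}`. -/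

theorem DW_lipschitz_in_H1
    {d : ℕ} (hd : 1 ≤ d)
    (w : ℝ → EuclideanSpace ℝ (Fin d) → ℝ)
    (hw : ∀ᵐ t ∂(volume.restrict (Ioo (0:ℝ) 1)),
      Differentiable ℝ (w t) ∧ ∃ K : NNReal, LipschitzWith K (gradient (w t)))
    (hCargrad : Caratheodory fun t => gradient (w t))
    (hnorm : IntervalIntegrable (fun t => (C11norm (w t)) ^ 2) volume 0 1)
    (γ₁ g₁ γ₂ g₂ η h : ℝ → EuclideanSpace ℝ (Fin d))
    (hγ₁ : IsAC2 γ₁ g₁) (hγ₂ : IsAC2 γ₂ g₂) (hη : IsAC2 η h) :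
    |∫ t in (0:ℝ)..1, ⟪gradient (w t) (γ₁ t) - gradient (w t) (γ₂ t), η t⟫| ≤
      Real.sqrt 2 * norm11 w *
        H1norm (fun t => γ₁ t - γ₂ t) (fun t => g₁ t - g₂ t) * H1norm η h := by
  have mem0 : (0:ℝ) ∈ Icc (0:ℝ) 1 := left_mem_Icc.mpr zero_le_one
  obtain ⟨Γ₁, hΓ₁c, hΓ₁⟩ := ac2_rep hγ₁
  obtain ⟨Γ₂, hΓ₂c, hΓ₂⟩ := ac2_rep hγ₂
  obtain ⟨Θ, hΘc, hΘ⟩ := ac2_rep hη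
  haveI hfin : IsFiniteMeasure (volume.restrict (Ioc (0:ℝ) 1)) :=
    ⟨by rw [Measure.restrict_apply_univ, Real.volume_Ioc]; norm_num⟩
  have hww : ∀ᵐ t ∂(volume.restrict (Ioc (0:ℝ) 1)),
      Differentiable ℝ (w t) ∧ ∃ K : NNReal, LipschitzWith K (gradient (w t)) := by
    rwa [Measure.restrict_congr_set Ioo_ae_eq_Ioc] at hw
  have hδAC : IsAC2 (fun t => γ₁ t - γ₂ t) (fun t => g₁ t - g₂ t) := by
    refine ⟨hγ₁.1.sub hγ₂.1, fun t ht => ?_⟩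
    have hsub : (∫ s in (0:ℝ)..t, (g₁ s - g₂ s))
        = (∫ s in (0:ℝ)..t, g₁ s) - ∫ s in (0:ℝ)..t, g₂ s :=
      intervalIntegral.integral_sub (ac2_ii hγ₁ mem0 ht) (ac2_ii hγ₂ mem0 ht)
    simp only
    rw [hsub, hγ₁.2 t ht, hγ₂.2 t ht]
    abel
  have hΓδag : ∀ t ∈ Icc (0:ℝ) 1, (fun t => Γ₁ t - Γ₂ t) t = γ₁ t - γ₂ t :=
    fun t ht => by simp only [hΓ₁ t ht, hΓ₂ t ht]
  have hDbd : ∀ t ∈ Icc (0:ℝ) 1,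
      ‖Γ₁ t - Γ₂ t‖ ≤ Real.sqrt 2 * H1norm (fun t => γ₁ t - γ₂ t) (fun t => g₁ t - g₂ t) :=
    sup_bound hδAC (hΓ₁c.sub hΓ₂c) hΓδag
  set Sδ := Real.sqrt 2 * H1norm (fun t => γ₁ t - γ₂ t) (fun t => g₁ t - g₂ t) with hSδdef
  have hSδnn : 0 ≤ Sδ := mul_nonneg (Real.sqrt_nonneg _) (Real.sqrt_nonneg _)
  have hΘbd : ∀ t ∈ Icc (0:ℝ) 1, ‖Θ t‖ ≤ Real.sqrt 2 * H1norm η h := sup_bound hη hΘc hΘ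
  set Sη := Real.sqrt 2 * H1norm η h with hSηdef
  have hSηnn : 0 ≤ Sη := mul_nonneg (Real.sqrt_nonneg _) (Real.sqrt_nonneg _)
  set C : ℝ → ℝ := fun t => C11norm (w t) with hCdef
  have hCnn : ∀ t, 0 ≤ C t := fun t => C11norm_nonneg _
  have hC2int : Integrable (fun t => C t ^ 2) (volume.restrict (Ioc (0:ℝ) 1)) := hnorm.1
  have hCmeas : AEStronglyMeasurable C (volume.restrict (Ioc (0:ℝ) 1)) := by
    have h1 : AEMeasurable (fun t => C t ^ 2) (volume.restrict (Ioc (0:ℝ) 1)) :=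
      hC2int.aemeasurable
    have h2 : AEMeasurable (fun t => Real.sqrt (C t ^ 2)) (volume.restrict (Ioc (0:ℝ) 1)) :=
      Real.continuous_sqrt.measurable.comp_aemeasurable h1
    have h3 : (fun t => Real.sqrt (C t ^ 2)) = C := funext fun t => Real.sqrt_sq (hCnn t)
    exact (h3 ▸ h2).aestronglyMeasurable
  have hCL2 : MemLp C 2 (volume.restrict (Ioc (0:ℝ) 1)) :=
    (memLp_two_iff_integrable_sq hCmeas).mpr hC2int
  have hCint : Integrable C (volume.restrict (Ioc (0:ℝ) 1)) := hCL2.integrable one_le_two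
  set D : ℝ → ℝ := fun t => ‖Γ₁ t - Γ₂ t‖ with hDdef
  have hDc : Continuous D := (hΓ₁c.sub hΓ₂c).norm
  have hDL2 : MemLp D 2 (volume.restrict (Ioc (0:ℝ) 1)) := by
    refine MemLp.of_bound hDc.aestronglyMeasurable Sδ ?_
    filter_upwards [ae_restrict_mem measurableSet_Ioc] with t ht
    rw [Real.norm_eq_abs, abs_of_nonneg (norm_nonneg _)]
    exact hDbd t (Ioc_subset_Icc_self ht)
  rw [intervalIntegral.integral_of_le zero_le_one]
  have hcongr : (∫ t in Ioc (0:ℝ) 1, ⟪gradient (w t) (γ₁ t) - gradient (w t) (γ₂ t), η t⟫)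
      = ∫ t in Ioc (0:ℝ) 1, ⟪gradient (w t) (Γ₁ t) - gradient (w t) (Γ₂ t), Θ t⟫ := by
    refine setIntegral_congr_fun measurableSet_Ioc fun t ht => ?_
    have ht' := Ioc_subset_Icc_self ht
    rw [hΓ₁ t ht', hΓ₂ t ht', hΘ t ht']
  rw [hcongr]
  have hGint : Integrable (fun t => C t * D t * Sη) (volume.restrict (Ioc (0:ℝ) 1)) := by
    refine Integrable.mul_const ?_ Sη
    refine Integrable.mono' (hCint.const_mul Sδ) (hCmeas.mul hDc.aestronglyMeasurable) ?_
    filter_upwards [ae_restrict_mem measurableSet_Ioc] with t ht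
    rw [Real.norm_eq_abs, abs_of_nonneg (mul_nonneg (hCnn t) (norm_nonneg _))]
    calc C t * D t
        ≤ C t * Sδ := mul_le_mul_of_nonneg_left (hDbd t (Ioc_subset_Icc_self ht)) (hCnn t)
      _ = Sδ * C t := mul_comm _ _
  have key : |∫ t in Ioc (0:ℝ) 1, ⟪gradient (w t) (Γ₁ t) - gradient (w t) (Γ₂ t), Θ t⟫|
      ≤ ∫ t in Ioc (0:ℝ) 1, C t * D t * Sη := by
    rw [← Real.norm_eq_abs]
    refine (norm_integral_le_integral_norm _).trans ?_
    refine integral_mono_of_nonneg (Filter.Eventually.of_forall fun t => norm_nonneg _)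
      hGint ?_
    filter_upwards [hww, ae_restrict_mem measurableSet_Ioc] with t htw htm
    have ht' : t ∈ Icc (0:ℝ) 1 := Ioc_subset_Icc_self htm
    have h1 : ‖gradient (w t) (Γ₁ t) - gradient (w t) (Γ₂ t)‖ ≤ C t * D t :=
      (norm_sub_le_lipConst _ htw.2 _ _).trans
        (mul_le_mul_of_nonneg_right (lipConst_le_C11norm (w t)) (norm_nonneg _))
    calc ‖⟪gradient (w t) (Γ₁ t) - gradient (w t) (Γ₂ t), Θ t⟫‖
        = |⟪gradient (w t) (Γ₁ t) - gradient (w t) (Γ₂ t), Θ t⟫| := Real.norm_eq_abs _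
      _ ≤ ‖gradient (w t) (Γ₁ t) - gradient (w t) (Γ₂ t)‖ * ‖Θ t‖ :=
          abs_real_inner_le_norm _ _
      _ ≤ (C t * D t) * Sη :=
          mul_le_mul h1 (hΘbd t ht') (norm_nonneg _) (mul_nonneg (hCnn t) (norm_nonneg _))
  refine key.trans ?_
  rw [MeasureTheory.integral_mul_const]
  have hCS : (∫ t in Ioc (0:ℝ) 1, C t * D t)
      ≤ Real.sqrt (∫ t in Ioc (0:ℝ) 1, C t ^ 2) * Real.sqrt (∫ t in Ioc (0:ℝ) 1, D t ^ 2) :=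
    myCS C D (Filter.Eventually.of_forall hCnn)
      (Filter.Eventually.of_forall fun t => norm_nonneg _) hCL2 hDL2
  have h11 : Real.sqrt (∫ t in Ioc (0:ℝ) 1, C t ^ 2) = norm11 w := by
    rw [norm11, intervalIntegral.integral_of_le zero_le_one]
  have hδle : Real.sqrt (∫ t in Ioc (0:ℝ) 1, D t ^ 2)
      ≤ H1norm (fun t => γ₁ t - γ₂ t) (fun t => g₁ t - g₂ t) := by
    have heq : (∫ t in Ioc (0:ℝ) 1, D t ^ 2)
        = ∫ t in (0:ℝ)..1, ‖γ₁ t - γ₂ t‖ ^ 2 := by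
      rw [intervalIntegral.integral_of_le zero_le_one]
      refine setIntegral_congr_fun measurableSet_Ioc fun t ht => ?_
      have ht' := Ioc_subset_Icc_self ht
      simp only [hDdef, hΓ₁ t ht', hΓ₂ t ht']
    have hknn : 0 ≤ ∫ t in (0:ℝ)..1, ‖g₁ t - g₂ t‖ ^ 2 :=
      intervalIntegral.integral_nonneg zero_le_one fun t _ => by positivity
    rw [heq]
    exact Real.sqrt_le_sqrt (by linarith)
  have hnn11 : 0 ≤ norm11 w := Real.sqrt_nonneg _
  calc (∫ t in Ioc (0:ℝ) 1, C t * D t) * Sη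
      ≤ (Real.sqrt (∫ t in Ioc (0:ℝ) 1, C t ^ 2)
          * Real.sqrt (∫ t in Ioc (0:ℝ) 1, D t ^ 2)) * Sη :=
        mul_le_mul_of_nonneg_right hCS hSηnn
    _ ≤ (norm11 w * H1norm (fun t => γ₁ t - γ₂ t) (fun t => g₁ t - g₂ t)) * Sη := by
        rw [h11]
        exact mul_le_mul_of_nonneg_right (mul_le_mul_of_nonneg_left hδle hnn11) hSηnn
    _ = Real.sqrt 2 * norm11 w * H1norm (fun t => γ₁ t - γ₂ t) (fun t => g₁ t - g₂ t)
          * H1norm η h := by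
        rw [hSηdef]; ring
end
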